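/- Every run [i..j] of a string w with period p contains, for each of the two lexicographic orders ≺₀ and ≺₁ (where ≺₁ is the reverse of ≺₀), at least one substring of length p that is a Lyndon word with respect to that order and that does not begin at position i (i.e., starts strictly after the beginning of the run). -/

import Mathlib

/-- A string is a Lyndon word w.r.t. an order `lt` on the alphabet:
it is (lexicographically) strictly smaller than every nonempty proper suffix. -/
def IsLyndonWrt {α : Type*} (lt : α → α → Prop) (w : List α) : Prop :=
  w ≠ [] ∧ ∀ i, 0 < i → i < w.length → List.Lex lt w (w.drop i)

/-- `p` is a period of `w`: `w[i] = w[i+p]` whenever both positions are valid. -/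
def HasPeriod {α : Type*} (w : List α) (p : ℕ) : Prop :=
  ∀ i, i + p < w.length → w[i]? = w[i + p]?

/-- `substr w i j` is the substring `w[i..j]` (1-indexed, inclusive). -/
def substr {α : Type*} (w : List α) (i j : ℕ) : List α :=
  (w.drop (i - 1)).take (j - i + 1)

/-- `[i..j]` (1-indexed) is a run of `w` with (smallest) period `p`:
`p` is the smallest period of `w[i..j]`, the exponent is at least 2, and the
periodicity with period `p` extends neither to the left nor to the right. -/
def IsRun {α : Type*} (w : List α) (i j p : ℕ) : Prop :=
  1 ≤ i ∧ i ≤ j ∧ j ≤ w.length ∧ 0 < p ∧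
  HasPeriod (substr w i j) p ∧
  (∀ q, 0 < q → q < p → ¬ HasPeriod (substr w i j) q) ∧
  2 * p ≤ j - i + 1 ∧
  (i = 1 ∨ ¬ HasPeriod (substr w (i - 1) j) p) ∧
  (j = w.length ∨ ¬ HasPeriod (substr w i (j + 1)) p)

theorem lex_irrefl {α : Type*} (lt : α → α → Prop) [IsIrrefl α lt] :
    ∀ l : List α, ¬ List.Lex lt l l
  | [] => fun h => by cases h
  | a :: l => fun h => by
      cases h with
      | cons h => exact lex_irrefl lt l h
      | rel h => exact irrefl_of lt a h

theorem lex_prefix_or {α : Type*} {lt : α → α → Prop} {a b : List α} (h : List.Lex lt a b) :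
    a <+: b ∨ ∀ x y, List.Lex lt (a ++ x) (b ++ y) := by
  induction h with
  | nil => exact Or.inl (List.nil_prefix)
  | @rel a₁ l₁ a₂ l₂ h => exact Or.inr fun x y => List.Lex.rel h
  | @cons a l₁ l₂ h ih =>
      rcases ih with hp | hl
      · exact Or.inl (List.cons_prefix_cons.mpr ⟨rfl, hp⟩)
      · exact Or.inr fun x y => List.Lex.cons (hl x y)

theorem lex_of_append_lex {α : Type*} {lt : α → α → Prop} [IsIrrefl α lt] :
    ∀ (c x y : List α), List.Lex lt (c ++ x) (c ++ y) → List.Lex lt x y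
  | [], x, y, h => h
  | a :: c, x, y, h => by
      cases h with
      | cons h => exact lex_of_append_lex c x y h
      | rel h => exact absurd h (irrefl_of lt a)

theorem lex_append_of_lex_of_length_eq {α : Type*} {lt : α → α → Prop} [IsIrrefl α lt]
    {a b : List α} (h : List.Lex lt a b) (hlen : a.length = b.length)
    (x y : List α) : List.Lex lt (a ++ x) (b ++ y) := by
  rcases lex_prefix_or h with hp | hl
  · have := hp.eq_of_length hlen
    subst this
    exact absurd h (lex_irrefl lt a)
  · exact hl x y

theorem exists_min_lex {α : Type*} [LinearOrder α] (f : ℕ → List α) :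
    ∀ n, 0 < n → ∃ t, t < n ∧ ∀ t', t' < n → ¬ List.Lex (· < ·) (f t') (f t) := by
  haveI : IsTrans (List α) (List.Lex (· < · : α → α → Prop)) :=
    ⟨fun _ _ _ h1 h2 => lt_trans (α := List α) h1 h2⟩
  haveI := List.Lex.trichotomous (· < · : α → α → Prop)
  haveI := List.Lex.asymm (· < · : α → α → Prop)
  intro n
  induction n with
  | zero => omega
  | succ n ih =>
    intro _
    rcases Nat.eq_zero_or_pos n with rfl | hn
    · refine ⟨0, by omega, ?_⟩
      intro t' ht'
      have : t' = 0 := by omega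
      subst this
      exact lex_irrefl _ _
    · obtain ⟨t, htn, hmin⟩ := ih hn
      rcases trichotomous_of (List.Lex (· < ·)) (f n) (f t) with h | h | h
      · refine ⟨n, by omega, ?_⟩
        intro t' ht' hcon
        rcases Nat.lt_succ_iff_lt_or_eq.mp ht' with h' | rfl
        · exact hmin t' h' (trans_of (List.Lex (· < ·)) hcon h)
        · exact lex_irrefl _ _ hcon
      · refine ⟨t, by omega, ?_⟩
        intro t' ht' hcon
        rcases Nat.lt_succ_iff_lt_or_eq.mp ht' with h' | rfl
        · exact hmin t' h' hcon
        · rw [h] at hcon; exact lex_irrefl _ _ hcon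
      · refine ⟨t, by omega, ?_⟩
        intro t' ht' hcon
        rcases Nat.lt_succ_iff_lt_or_eq.mp ht' with h' | rfl
        · exact hmin t' h' hcon
        · exact asymm_of (List.Lex (· < ·)) h hcon

theorem List_ext_getElem?' {α : Type*} {l₁ l₂ : List α}
    (h : ∀ n, n < max l₁.length l₂.length → l₁[n]? = l₂[n]?) : l₁ = l₂ :=
  List.ext_getElem? fun n => if hn : n < max l₁.length l₂.length then h n hn else by
    rw [List.getElem?_eq_none (by omega), List.getElem?_eq_none (by omega)]

theorem key_lemma {α : Type*} [LinearOrder α] (s : List α) (p : ℕ) (hp : 0 < p)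
    (hper : HasPeriod s p) (hmin : ∀ q, 0 < q → q < p → ¬ HasPeriod s q)
    (hlen : 2 * p ≤ s.length) :
    ∃ t, 0 < t ∧ t + p ≤ s.length ∧ IsLyndonWrt (· < ·) ((s.drop t).take p) := by
  haveI := List.Lex.trichotomous (· < · : α → α → Prop)
  set u : List α := s.take p with hu
  have hul : u.length = p := by
    rw [hu, List.length_take]
    omega
  -- factor extraction equals rotation
  have fact1 : ∀ t, t ≤ p → t + p ≤ s.length → (s.drop t).take p = u.rotate t := by
    intro t ht htl
    rw [List.rotate_eq_drop_append_take (by omega : t ≤ u.length)]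
    apply List_ext_getElem?'
    intro m hm
    rw [List.length_take, List.length_drop, List.length_append, List.length_take,
      List.length_drop, hul] at hm
    have hmp : m < p := by omega
    rw [List.getElem?_take_of_lt hmp, List.getElem?_drop]
    rcases lt_or_ge m (p - t) with hc | hc
    · rw [List.getElem?_append_left (by rw [List.length_drop, hul]; omega), List.getElem?_drop, hu,
        List.getElem?_take_of_lt (by omega : t + m < p)]
    · rw [List.getElem?_append_right (by rw [List.length_drop, hul]; omega),
        List.length_drop, hul, List.getElem?_take_of_lt (by omega : m - (p - t) < t), hu,
        List.getElem?_take_of_lt (by omega : m - (p - t) < p)]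
      have hx := hper (t + m - p) (by omega)
      have he : t + m - p + p = t + m := by omega
      rw [he] at hx
      rw [← hx]
      congr 1
      omega
  -- s.get? reduces mod p
  have red : ∀ x, x < s.length → s[x]? = s[x % p]? := by
    intro x
    induction x using Nat.strong_induction_on with
    | _ x ih =>
      intro hx
      rcases lt_or_ge x p with h | h
      · rw [Nat.mod_eq_of_lt h]
      · have hx1 := hper (x - p) (by omega)
        have he : x - p + p = x := by omega
        rw [he] at hx1
        rw [← hx1, ih (x - p) (by omega) (by omega), Nat.mod_eq_sub_mod h]
  have useq : ∀ y, y < p → u[y]? = s[y]? := by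
    intro y hy
    rw [hu, List.getElem?_take_of_lt hy]
  -- rotation fixed points give small periods
  have rotper : ∀ k, 0 < k → k < p → u.rotate k = u → HasPeriod u k := by
    intro k hk hkp hrot m hm
    rw [hul] at hm
    conv_lhs => rw [← hrot]
    rw [List.rotate_eq_drop_append_take (by omega : k ≤ u.length),
      List.getElem?_append_left (by rw [List.length_drop, hul]; omega), List.getElem?_drop]
    congr 1
    omega
  -- primitivity
  have hprim : ∀ k, 0 < k → k < p → u.rotate k ≠ u := by
    intro k hk hkp hrot
    have hg0 : 0 < Nat.gcd k p := Nat.gcd_pos_of_pos_left _ hk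
    have hgk : Nat.gcd k p ≤ k := Nat.le_of_dvd hk (Nat.gcd_dvd_left k p)
    have hgp : Nat.gcd k p ∣ p := Nat.gcd_dvd_right k p
    obtain ⟨m, -, hm⟩ := Nat.exists_mul_mod_eq_gcd (k := p) (n := k) (lt_of_le_of_lt hgk hkp)
    have hrotmul : ∀ a, u.rotate (k * a) = u := by
      intro a
      induction a with
      | zero => simp
      | succ a ih => rw [Nat.mul_succ, ← List.rotate_rotate, ih, hrot]
    have hrotg : u.rotate (Nat.gcd k p) = u := by
      rw [← hm, ← hul, List.rotate_mod]
      exact hrotmul m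
    have hug : HasPeriod u (Nat.gcd k p) := rotper _ hg0 (lt_of_le_of_lt hgk hkp) hrotg
    -- reduce u indices mod g
    have ured : ∀ y, y < p → u[y]? = u[y % Nat.gcd k p]? := by
      intro y
      induction y using Nat.strong_induction_on with
      | _ y ih =>
        intro hy
        rcases lt_or_ge y (Nat.gcd k p) with h | h
        · rw [Nat.mod_eq_of_lt h]
        · have hy1 := hug (y - Nat.gcd k p) (by rw [hul]; omega)
          have he : y - Nat.gcd k p + Nat.gcd k p = y := by omega
          rw [he] at hy1
          rw [← hy1, ih (y - Nat.gcd k p) (by omega) (by omega),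
            Nat.mod_eq_sub_mod h]
    have hsg : HasPeriod s (Nat.gcd k p) := by
      intro m hm'
      rw [red m (by omega), red (m + Nat.gcd k p) (by omega),
        ← useq _ (Nat.mod_lt _ hp), ← useq _ (Nat.mod_lt _ hp),
        ured _ (Nat.mod_lt _ hp), ured _ (Nat.mod_lt _ hp),
        Nat.mod_mod_of_dvd _ hgp, Nat.mod_mod_of_dvd _ hgp,
        Nat.add_mod_right]
    exact hmin _ hg0 (lt_of_le_of_lt hgk hkp) hsg
  -- minimal rotation
  obtain ⟨t, htp, hminrot⟩ := exists_min_lex (fun t => u.rotate t) p hp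
  set r : List α := u.rotate t with hr
  have hrlen : r.length = p := by rw [hr, List.length_rotate, hul]
  have rots : ∀ k, r.rotate k = u.rotate ((t + k) % p) := by
    intro k
    rw [hr, List.rotate_rotate, ← hul, List.rotate_mod]
  have hminr : ∀ k, ¬ List.Lex (· < ·) (u.rotate ((t + k) % p)) r :=
    fun k => hminrot _ (Nat.mod_lt _ hp)
  have hne : ∀ k, 0 < k → k < p → r.rotate k ≠ r := by
    intro k hk hkp hcon
    apply hprim k hk hkp
    have h1 : (r.rotate k).rotate (p - t) = r.rotate (p - t) := by rw [hcon]
    rw [hr, List.rotate_rotate, List.rotate_rotate, List.rotate_rotate] at h1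
    have e1 : t + (k + (p - t)) = p + k := by omega
    have e2 : t + (p - t) = p := by omega
    rw [e1, e2, ← List.rotate_rotate, ← hul, List.rotate_length] at h1
    exact h1
  -- r is Lyndon
  have hlyndon : IsLyndonWrt (· < ·) r := by
    constructor
    · intro hnil
      rw [hnil] at hrlen
      simp at hrlen
      omega
    · intro k hk hklen
      rw [hrlen] at hklen
      rcases trichotomous_of (List.Lex (· < ·)) r (r.drop k) with h | h | h
      · exact h
      · have := congrArg List.length h
        rw [List.length_drop, hrlen] at this
        omega
      · have hle : ¬ List.Lex (· < ·) (r.rotate k) r := by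
          rw [rots k]; exact hminr k
        rcases lex_prefix_or h with hpfx | hall
        · -- drop k r is a prefix of r
          have hdk : r.drop k = r.take (p - k) := by
            have := List.prefix_iff_eq_take.mp hpfx
            rwa [List.length_drop, hrlen] at this
          have hstrict : List.Lex (· < ·) r (r.rotate k) := by
            rcases trichotomous_of (List.Lex (· < ·)) r (r.rotate k) with h1 | h1 | h1
            · exact h1
            · exact absurd h1.symm (hne k hk hklen)
            · exact absurd h1 hle
          have h2 : List.Lex (· < ·) (r.drop (p - k)) (r.take k) := by
            apply lex_of_append_lex (r.take (p - k))
            rw [List.take_append_drop]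
            have e2 : r.rotate k = r.take (p - k) ++ r.take k := by
              rw [List.rotate_eq_drop_append_take (by omega : k ≤ r.length), hdk]
            rw [← e2]
            exact hstrict
          have h3 : List.Lex (· < ·) (r.rotate (p - k)) r := by
            have h4 := lex_append_of_lex_of_length_eq h2
              (by rw [List.length_drop, List.length_take, hrlen]; omega)
              (r.take (p - k)) (r.drop k)
            rw [List.take_append_drop, ← List.rotate_eq_drop_append_take
              (by omega : p - k ≤ r.length)] at h4
            exact h4
          rw [rots (p - k)] at h3
          exact absurd h3 (hminr (p - k))
        · have h5 := hall (r.take k) []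
          rw [List.append_nil, ← List.rotate_eq_drop_append_take
            (by omega : k ≤ r.length)] at h5
          exact absurd h5 hle
  -- choose position
  rcases Nat.eq_zero_or_pos t with rfl | ht0
  · refine ⟨p, hp, by omega, ?_⟩
    rw [fact1 p le_rfl (by omega), ← hul, List.rotate_length]
    rw [hr, List.rotate_zero] at hlyndon
    exact hlyndon
  · refine ⟨t, ht0, by omega, ?_⟩
    rw [fact1 t (by omega) (by omega)]
    exact hlyndon


/-- Every run `[i..j]` of `w` with period `p` contains, for each of the two opposite
lexicographic orders, a length-`p` factor that is a Lyndon word w.r.t. that order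
and that starts strictly after position `i`. -/
theorem stmt6 {α : Type*} [LinearOrder α] (w : List α) (i j p : ℕ)
    (hrun : IsRun w i j p) :
    (∃ i', i < i' ∧ i' + p - 1 ≤ j ∧
      IsLyndonWrt (· < ·) (substr w i' (i' + p - 1))) ∧
    (∃ i', i < i' ∧ i' + p - 1 ≤ j ∧
      IsLyndonWrt (fun a b => b < a) (substr w i' (i' + p - 1))) := by
  obtain ⟨hi1, hij, hjw, hp, hper, hmin, hexp, -, -⟩ := hrun
  have hsl : (substr w i j).length = j - i + 1 := by
    unfold substr
    rw [List.length_take, List.length_drop]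
    omega
  have hfac : ∀ t, 0 < t → t + p ≤ (substr w i j).length →
      substr w (i + t) (i + t + p - 1) = ((substr w i j).drop t).take p := by
    intro t ht htl
    rw [hsl] at htl
    unfold substr
    rw [List.drop_take, List.drop_drop, List.take_take]
    have e1 : i + t + p - 1 - (i + t) + 1 = p := by omega
    have e2 : i - 1 + t = i + t - 1 := by omega
    have e3 : p ⊓ (j - i + 1 - t) = p := by omega
    rw [e1, e2, e3]
  constructor
  · obtain ⟨t, ht0, htl, hly⟩ := key_lemma (substr w i j) p hp hper hmin (by omega)
    refine ⟨i + t, by omega, by rw [hsl] at htl; omega, ?_⟩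
    rw [hfac t ht0 htl]
    exact hly
  · obtain ⟨t, ht0, htl, hly⟩ :=
      key_lemma (α := αᵒᵈ) (substr w i j) p hp hper hmin (le_of_le_of_eq hexp hsl.symm)
    refine ⟨i + t, by omega, by have htl' : t + p ≤ j - i + 1 := le_of_le_of_eq htl hsl; omega, ?_⟩
    rw [hfac t ht0 htl]
    exact hly
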